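/- arXiv:1411.4835 — 6 statements merged into one kernel-verified Lean document; each statement's English description precedes it below -/
import Mathlib

section
/- Let N ∈ ℕ and let S ⊆ {1,…,N} satisfy the ballot condition. Then the set S ∪ {N+2}, viewed as a subset of {1,…,N+2}, again satisfies the ballot condition, and maj(S ∪ {N+2}) = maj(S) + (N+1). (Equivalently: the serpentine embedding i_N, which adds the entry N+1 to the first row and the entry N+2 to the second row of a standard Young tableau with at most two rows and N cells, produces a standard Young tableau with N+2 cells whose major index exceeds that of the original tableau by exactly N+1.) -/
/-- The ballot condition: `S ⊆ {1,…,N}` encodes the second row of a standard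
Young tableau with at most two rows and `N` cells iff
`2·|S ∩ {1,…,m}| ≤ m` for every `m ∈ {1,…,N}`. -/
def IsBallot (N : ℕ) (S : Finset ℕ) : Prop :=
  S ⊆ Finset.Icc 1 N ∧ ∀ m ∈ Finset.Icc 1 N, 2 * (S ∩ Finset.Icc 1 m).card ≤ m

/-- The descent set `des(S) = {i ∈ {1,…,N−1} : i ∉ S and i+1 ∈ S}`. -/
def desSet (N : ℕ) (S : Finset ℕ) : Finset ℕ :=
  (Finset.Icc 1 (N - 1)).filter fun i => i ∉ S ∧ i + 1 ∈ S

/-- The major index `maj(S) = Σ_{i ∈ des(S)} i`. -/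
def maj (N : ℕ) (S : Finset ℕ) : ℕ := ∑ i ∈ desSet N S, i

/-- The serpentine embedding `i_N` (adding entry `N+1` to the first row and
`N+2` to the second row) maps ballot sets to ballot sets and increases the
major index by exactly `N+1`. -/
theorem serpentine_embedding_maj (N : ℕ) (S : Finset ℕ) (hS : IsBallot N S) :
    IsBallot (N + 2) (S ∪ {N + 2}) ∧
      maj (N + 2) (S ∪ {N + 2}) = maj N S + (N + 1) := by
  obtain ⟨hsub, hbal⟩ := hS
  have hNS : ∀ x ∈ S, 1 ≤ x ∧ x ≤ N := fun x hx => Finset.mem_Icc.mp (hsub hx)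
  -- S ∩ Icc 1 N = S
  have hSinter : S ∩ Finset.Icc 1 N = S := Finset.inter_eq_left.mpr hsub
  have h2N : 2 * S.card ≤ N := by
    rcases Nat.eq_zero_or_pos N with h0 | hpos
    · have : S = ∅ := by
        rw [Finset.eq_empty_iff_forall_notMem]
        intro x hx; have := hNS x hx; omega
      simp [this, h0]
    · have := hbal N (Finset.mem_Icc.mpr ⟨hpos, le_refl N⟩)
      rwa [hSinter] at this
  constructor
  · constructor
    · intro x hx
      rcases Finset.mem_union.mp hx with hx | hx
      · have := hNS x hx; exact Finset.mem_Icc.mpr ⟨this.1, by omega⟩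
      · have : x = N + 2 := Finset.mem_singleton.mp hx
        exact Finset.mem_Icc.mpr ⟨by omega, by omega⟩
    · intro m hm
      rw [Finset.mem_Icc] at hm
      by_cases h : m ≤ N + 1
      · have heq : (S ∪ {N + 2}) ∩ Finset.Icc 1 m = S ∩ Finset.Icc 1 m := by
          ext x
          simp only [Finset.mem_inter, Finset.mem_union, Finset.mem_singleton,
            Finset.mem_Icc]
          constructor
          · rintro ⟨hx | rfl, h1, h2⟩
            · exact ⟨hx, h1, h2⟩
            · omega
          · rintro ⟨hx, h1, h2⟩; exact ⟨Or.inl hx, h1, h2⟩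
        rw [heq]
        by_cases hmN : m ≤ N
        · exact hbal m (Finset.mem_Icc.mpr ⟨hm.1, hmN⟩)
        · have : (S ∩ Finset.Icc 1 m).card ≤ S.card :=
            Finset.card_le_card Finset.inter_subset_left
          omega
      · -- m = N + 2
        have hm2 : m = N + 2 := by omega
        subst hm2
        have heq : (S ∪ {N + 2}) ∩ Finset.Icc 1 (N + 2) = S ∪ {N + 2} := by
          apply Finset.inter_eq_left.mpr
          intro x hx
          rcases Finset.mem_union.mp hx with hx | hx
          · have := hNS x hx; exact Finset.mem_Icc.mpr ⟨this.1, by omega⟩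
          · have : x = N + 2 := Finset.mem_singleton.mp hx
            exact Finset.mem_Icc.mpr ⟨by omega, by omega⟩
        rw [heq]
        have hnot : N + 2 ∉ S := by intro h; have := hNS _ h; omega
        rw [Finset.union_comm, ← Finset.insert_eq, Finset.card_insert_of_notMem hnot]
        omega
  · have hdes : desSet (N + 2) (S ∪ {N + 2}) = insert (N + 1) (desSet N S) := by
      ext i
      simp only [desSet, Finset.mem_filter, Finset.mem_Icc, Finset.mem_union,
        Finset.mem_singleton, Finset.mem_insert, not_or]
      constructor
      · rintro ⟨⟨h1, h2⟩, ⟨hiS, hi2⟩, hi1⟩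
        rcases hi1 with hi1 | hi1
        · right
          have := hNS _ hi1
          exact ⟨⟨h1, by omega⟩, hiS, hi1⟩
        · left; omega
      · rintro (rfl | ⟨⟨h1, h2⟩, hiS, hi1⟩)
        · refine ⟨⟨by omega, by omega⟩, ⟨?_, by omega⟩, Or.inr (by omega)⟩
          intro h; have := hNS _ h; omega
        · have := hNS _ hi1
          exact ⟨⟨h1, by omega⟩, ⟨hiS, by omega⟩, Or.inl hi1⟩
    have hnot : N + 1 ∉ desSet N S := by
      simp only [desSet, Finset.mem_filter, Finset.mem_Icc]
      rintro ⟨⟨_, h⟩, _⟩; omega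
    rw [maj, hdes, Finset.sum_insert hnot, maj]
    omega
end

section
/- Let n ∈ ℕ and let S ⊆ {1,…,2n} satisfy the ballot condition. For every m ∈ ℕ set S_m = S ∪ {2n+2, 2n+4, …, 2n+2m} ⊆ {1,…,2n+2m} (the m-fold iterate of the serpentine embedding applied to S). Then each S_m satisfies the ballot condition and, as integers, (n+m)² − maj(S_m) = n² − maj(S). (Hence the stable major index r(τ) = lim_{n→∞} (n² − maj([τ]_{2n})) of an infinite serpentine tableau τ is well defined: the quantity n² − maj([τ]_{2n}) is eventually constant along the chain of serpentine embeddings.) -/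
lemma ballot_card (N : ℕ) (T : Finset ℕ) (h : IsBallot N T) : 2 * T.card ≤ N := by
  obtain ⟨hsub, hball⟩ := h
  rcases Nat.eq_zero_or_pos N with h0 | h0
  · have : T = ∅ := Finset.eq_empty_of_forall_notMem fun x hx => by
      have := hsub hx; simp [Finset.mem_Icc] at this; omega
    simp [this]
  · have h1 := hball N (by simp [Finset.mem_Icc]; omega)
    rwa [Finset.inter_eq_left.mpr hsub] at h1

lemma ballot_step (N : ℕ) (T : Finset ℕ) (h : IsBallot N T) :
    IsBallot (N + 2) (insert (N + 2) T) := by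
  have hcard := ballot_card N T h
  obtain ⟨hsub, hball⟩ := h
  constructor
  · intro x hx
    rcases Finset.mem_insert.mp hx with rfl | hx
    · simp [Finset.mem_Icc]
    · have := hsub hx; simp [Finset.mem_Icc] at *; omega
  · intro m hm
    simp only [Finset.mem_Icc] at hm
    by_cases hle : m ≤ N
    · rw [Finset.insert_inter_of_notMem (by simp [Finset.mem_Icc]; omega)]
      exact hball m (by simp [Finset.mem_Icc]; omega)
    · have hTm : T ∩ Finset.Icc 1 m = T := Finset.inter_eq_left.mpr
        (fun x hx => by have := hsub hx; simp [Finset.mem_Icc] at *; omega)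
      by_cases hm2 : m = N + 2
      · subst hm2
        rw [Finset.insert_inter_of_mem (by simp [Finset.mem_Icc]), hTm]
        have : (insert (N + 2) T).card ≤ T.card + 1 := Finset.card_insert_le _ _
        omega
      · rw [Finset.insert_inter_of_notMem (by simp [Finset.mem_Icc]; omega), hTm]
        omega

lemma des_step (N : ℕ) (T : Finset ℕ) (hsub : T ⊆ Finset.Icc 1 N) :
    desSet (N + 2) (insert (N + 2) T) = insert (N + 1) (desSet N T) := by
  have hmem : ∀ x ∈ T, 1 ≤ x ∧ x ≤ N := fun x hx => by
    have := hsub hx; simpa [Finset.mem_Icc] using this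
  ext i
  simp only [desSet, Finset.mem_filter, Finset.mem_Icc, Finset.mem_insert,
    Nat.add_sub_cancel]
  constructor
  · rintro ⟨⟨h1, h2⟩, h3, h4⟩
    push_neg at h3
    by_cases hi : i = N + 1
    · exact Or.inl hi
    · right
      rcases h4 with h4 | h4
      · omega
      · have := hmem _ h4
        exact ⟨⟨h1, by omega⟩, h3.2, h4⟩
  · rintro (rfl | ⟨⟨h1, h2⟩, h3, h4⟩)
    · refine ⟨⟨by omega, by omega⟩, ?_, Or.inl (by omega)⟩
      push_neg
      exact ⟨by omega, fun h => by have := hmem _ h; omega⟩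
    · refine ⟨⟨h1, by omega⟩, ?_, Or.inr h4⟩
      push_neg
      exact ⟨by omega, h3⟩

lemma maj_step (N : ℕ) (T : Finset ℕ) (hsub : T ⊆ Finset.Icc 1 N) :
    maj (N + 2) (insert (N + 2) T) = (N + 1) + maj N T := by
  rw [maj, des_step N T hsub, Finset.sum_insert, maj]
  intro h
  have := (Finset.mem_filter.mp h).1
  simp only [Finset.mem_Icc] at this
  omega

/-- Iterating the serpentine embedding `m` times starting from a ballot set
`S ⊆ {1,…,2n}` yields the ballot set
`S_m = S ∪ {2n+2, 2n+4, …, 2n+2m} ⊆ {1,…,2n+2m}`, and the integer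
`(n+m)² − maj(S_m)` does not depend on `m`: it equals `n² − maj(S)`.
Hence the stable major index of an infinite serpentine tableau is well
defined. -/
theorem stable_major_index_well_defined (n : ℕ) (S : Finset ℕ)
    (hS : IsBallot (2 * n) S) (m : ℕ) :
    IsBallot (2 * n + 2 * m)
        (S ∪ (Finset.Icc 1 m).image fun j => 2 * n + 2 * j) ∧
      ((n + m : ℤ) ^ 2 -
          (maj (2 * n + 2 * m)
            (S ∪ (Finset.Icc 1 m).image fun j => 2 * n + 2 * j) : ℤ)) =
        (n : ℤ) ^ 2 - (maj (2 * n) S : ℤ) := by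
  induction m with
  | zero => simpa using hS
  | succ m ih =>
    obtain ⟨ihb, ihm⟩ := ih
    have hIcc : Finset.Icc 1 (m + 1) = insert (m + 1) (Finset.Icc 1 m) :=
      (Finset.insert_Icc_right_eq_Icc_add_one (by omega)).symm
    have hset : (S ∪ (Finset.Icc 1 (m + 1)).image fun j => 2 * n + 2 * j) =
        insert (2 * n + 2 * m + 2)
          (S ∪ (Finset.Icc 1 m).image fun j => 2 * n + 2 * j) := by
      rw [hIcc, Finset.image_insert, Finset.union_insert]
      congr 1
    have hN : 2 * n + 2 * (m + 1) = (2 * n + 2 * m) + 2 := by omega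
    rw [hset, hN]
    refine ⟨ballot_step _ _ ihb, ?_⟩
    rw [maj_step _ _ ihb.1]
    push_cast
    ring_nf
    ring_nf at ihm
    linarith
end

section
/- For every n ∈ ℕ and every S ⊆ {1,…,2n} satisfying the ballot condition, maj(S) ≤ n²; moreover equality maj(S) = n² holds if and only if S = {2, 4, …, 2n}. (Equivalently: the stable major index of every serpentine tableau is a nonnegative integer, and at each finite level the maximal major index n² among all two-row standard Young tableaux with 2n cells is attained only by the truncated principal tableau [τ_0]_{2n}.) -/
lemma sum_bound (M : ℕ) : ∀ (T : Finset ℕ), T ⊆ Finset.Icc 1 M →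
    2 * (∑ x ∈ T, x) + T.card ^ 2 ≤ T.card * (2 * M + 1) := by
  induction M with
  | zero =>
    intro T hT
    have hTe : T = ∅ := Finset.subset_empty.mp (by simpa using hT)
    simp [hTe]
  | succ M ih =>
    intro T hT
    by_cases hM : M + 1 ∈ T
    · have hsub : T.erase (M+1) ⊆ Finset.Icc 1 M := by
        intro x hx
        have hx1 := Finset.mem_of_mem_erase hx
        have hxne := Finset.ne_of_mem_erase hx
        have := hT hx1
        simp only [Finset.mem_Icc] at this ⊢
        omega
      have h1 := ih _ hsub
      have hpos : 1 ≤ T.card := Finset.card_pos.mpr ⟨_, hM⟩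
      have hcard : T.card = (T.erase (M+1)).card + 1 := by
        rw [Finset.card_erase_of_mem hM]; omega
      have hsum : ∑ x ∈ T, x = (∑ x ∈ T.erase (M+1), x) + (M+1) := by
        rw [← Finset.sum_erase_add T _ hM]
      rw [hcard, hsum]
      nlinarith [h1]
    · have hsub : T ⊆ Finset.Icc 1 M := by
        intro x hx
        have := hT hx
        simp only [Finset.mem_Icc] at this ⊢
        have : x ≠ M + 1 := fun h => hM (h ▸ hx)
        omega
      have h1 := ih _ hsub
      nlinarith [h1]

/-- For every ballot set `S ⊆ {1,…,2n}` one has `maj(S) ≤ n²`, with equality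
iff `S = {2, 4, …, 2n}` (the encoding of the truncated principal tableau
`[τ_0]_{2n}`).  Hence the stable major index of every serpentine tableau is a
nonnegative integer. -/
theorem maj_le_sq (n : ℕ) (S : Finset ℕ) (hS : IsBallot (2 * n) S) :
    maj (2 * n) S ≤ n ^ 2 ∧
      (maj (2 * n) S = n ^ 2 ↔ S = (Finset.Icc 1 n).image fun j => 2 * j) := by
  obtain ⟨hSsub, hBallot⟩ := hS
  rcases Nat.eq_zero_or_pos n with rfl | hn
  · have hSempty : S = ∅ := Finset.subset_empty.mp (by simpa using hSsub)
    constructor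
    · simp [maj, desSet]
    · simp [maj, desSet, hSempty]
  set D := desSet (2*n) S with hD
  have hDmem : ∀ i ∈ D, 1 ≤ i ∧ i ≤ 2*n - 1 ∧ i ∉ S ∧ i + 1 ∈ S := by
    intro i hi
    rw [hD] at hi
    simp only [desSet, Finset.mem_filter, Finset.mem_Icc] at hi
    tauto
  have hdisj : Disjoint D (D.image (· + 1)) := by
    rw [Finset.disjoint_left]
    intro x hx hx'
    obtain ⟨y, hy, rfl⟩ := Finset.mem_image.mp hx'
    exact (hDmem _ hx).2.2.1 (hDmem _ hy).2.2.2
  have hinj : ∀ x ∈ D, ∀ y ∈ D, x + 1 = y + 1 → x = y := by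
    intro a _ b _ h; omega
  set T := D ∪ D.image (· + 1) with hT
  have hTsub : T ⊆ Finset.Icc 1 (2*n) := by
    intro x hx
    rcases Finset.mem_union.mp hx with h | h
    · have := hDmem _ h; simp only [Finset.mem_Icc]; omega
    · obtain ⟨y, hy, rfl⟩ := Finset.mem_image.mp h
      have := hDmem _ hy; simp only [Finset.mem_Icc]; omega
  have hcardT : T.card = 2 * D.card := by
    rw [hT, Finset.card_union_of_disjoint hdisj, Finset.card_image_of_injOn hinj]
    ring
  have hsumT : ∑ x ∈ T, x = 2 * (∑ i ∈ D, i) + D.card := by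
    rw [hT, Finset.sum_union hdisj, Finset.sum_image hinj, Finset.sum_add_distrib]
    simp only [Finset.sum_const, smul_eq_mul, mul_one]
    omega
  have hkey := sum_bound (2*n) T hTsub
  rw [hcardT, hsumT] at hkey
  have hmaj : maj (2*n) S = ∑ i ∈ D, i := rfl
  have hk_le : D.card ≤ n := by
    have h := Finset.card_le_card hTsub
    rw [hcardT, Nat.card_Icc] at h
    omega
  zify at hkey
  have hineq : maj (2*n) S ≤ n ^ 2 := by
    rw [hmaj]
    zify
    nlinarith [hkey, sq_nonneg ((n:ℤ) - D.card)]
  refine ⟨hineq, ?_, ?_⟩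
  · -- forward direction of the iff
    intro heq
    have hSig : (∑ i ∈ D, (i:ℤ)) = (n:ℤ)^2 := by
      have h : (∑ i ∈ D, i) = n^2 := by rw [← hmaj]; exact heq
      zify at h
      exact h
    have h1 : ((n:ℤ) - D.card)^2 ≤ 0 := by nlinarith [hkey, hSig]
    have h2 : ((n:ℤ) - D.card) = 0 := sq_eq_zero_iff.mp (le_antisymm h1 (sq_nonneg _))
    have hk : D.card = n := by
      have : (n:ℤ) = (D.card : ℤ) := by linarith
      exact_mod_cast this.symm
    have hTeq : T = Finset.Icc 1 (2*n) := by
      apply Finset.eq_of_subset_of_card_le hTsub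
      rw [hcardT, hk, Nat.card_Icc]
      omega
    have hDodd : ∀ i, 1 ≤ i → i ≤ 2*n → (i % 2 = 1 → i ∈ D) ∧ (i % 2 = 0 → i ∉ D) := by
      intro i
      induction i using Nat.strong_induction_on with
      | _ i ih =>
        intro h1 h2
        constructor
        · intro hodd
          have hiT : i ∈ T := by rw [hTeq]; simp only [Finset.mem_Icc]; omega
          rcases Finset.mem_union.mp hiT with h | h
          · exact h
          · exfalso
            obtain ⟨y, hy, hyx⟩ := Finset.mem_image.mp h
            have hy1 := (hDmem _ hy).1
            have hy2 := (hDmem _ hy).2.1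
            exact (ih y (by omega) (by omega) (by omega)).2 (by omega) hy
        · intro heven hiD
          have h3 : i - 1 ∈ D := (ih (i-1) (by omega) (by omega) (by omega)).1 (by omega)
          have h4 : i ∈ D.image (· + 1) := Finset.mem_image.mpr ⟨i-1, h3, by omega⟩
          exact (Finset.disjoint_left.mp hdisj hiD) h4
    have hsub2 : D.image (· + 1) ⊆ S := by
      intro x hx
      obtain ⟨y, hy, rfl⟩ := Finset.mem_image.mp hx
      exact (hDmem _ hy).2.2.2
    have hScard : S.card ≤ n := by
      have h := hBallot (2*n) (by simp only [Finset.mem_Icc]; omega)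
      rw [Finset.inter_eq_left.mpr hSsub] at h
      omega
    have hSeq : S = D.image (· + 1) := by
      refine (Finset.eq_of_subset_of_card_le hsub2 ?_).symm
      rw [Finset.card_image_of_injOn hinj, hk]
      exact hScard
    rw [hSeq]
    ext x
    simp only [Finset.mem_image, Finset.mem_Icc]
    constructor
    · rintro ⟨y, hy, rfl⟩
      have h1 := hDmem _ hy
      have hodd : y % 2 = 1 := by
        by_contra h
        exact (hDodd y h1.1 (by omega)).2 (by omega) hy
      exact ⟨(y+1)/2, ⟨by omega, by omega⟩, by omega⟩
    · rintro ⟨j, hj, rfl⟩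
      exact ⟨2*j - 1, (hDodd (2*j-1) (by omega) (by omega)).1 (by omega), by omega⟩
  · -- reverse direction of the iff
    intro hSE
    have hdes : desSet (2*n) S = (Finset.range n).image (fun j => 2*j + 1) := by
      ext i
      simp only [desSet, Finset.mem_filter, Finset.mem_Icc, hSE, Finset.mem_image,
        Finset.mem_range]
      constructor
      · rintro ⟨⟨ha, hb⟩, hni, j, ⟨hj1, hj2⟩, hji⟩
        exact ⟨j - 1, by omega, by omega⟩
      · rintro ⟨j, hj, rfl⟩
        refine ⟨⟨by omega, by omega⟩, ?_, ⟨j+1, ⟨by omega, by omega⟩, by omega⟩⟩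
        rintro ⟨j', ⟨_, _⟩, h⟩
        omega
    have hsum : ∀ m : ℕ, ∑ j ∈ Finset.range m, (2*j+1) = m^2 := by
      intro m
      induction m with
      | zero => simp
      | succ m ih => rw [Finset.sum_range_succ, ih]; ring
    show (∑ i ∈ desSet (2*n) S, i) = n^2
    rw [hdes, Finset.sum_image (by intro a _ b _ h; simp only at h; omega)]
    exact hsum n
end

section
/- Let 0 ≤ k ≤ n be integers and let S ⊆ {1,…,2n} satisfy the ballot condition with |S| = n−k (so S encodes a standard Young tableau of shape (n+k, n−k)). Then maj(S) ≤ n² − k², and equality holds if and only if S = {2k+2, 2k+4, …, 2n}. (Equivalently: among two-row standard Young tableaux of shape (n+k, n−k), the major index is at most n² − k², with the maximum attained exactly at the truncated principal tableau [τ_k]_{2n}; on the level of stable major indices, r(τ) ≥ k² for every infinite tableau τ tail-equivalent to τ_k, with equality only for τ = τ_k.) -/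
lemma sum_odd_Icc (k n : ℕ) (h : k ≤ n) :
    ∑ j ∈ Finset.Icc (k+1) n, (2*(j:ℤ) - 1) = (n:ℤ)^2 - (k:ℤ)^2 := by
  induction n with
  | zero =>
    interval_cases k
    simp
  | succ n ih =>
    rcases Nat.lt_or_ge k (n+1) with h' | h'
    · have hk : k ≤ n := by omega
      rw [Finset.sum_Icc_succ_top (by omega : k + 1 ≤ n + 1), ih hk]
      push_cast; ring
    · have : k = n + 1 := by omega
      subst this
      rw [Finset.Icc_eq_empty (by omega)]
      simp

/-- Among two-row standard Young tableaux of shape `(n+k, n−k)` (encoded by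
ballot sets `S ⊆ {1,…,2n}` with `|S| = n−k`), the major index is at most
`n² − k²`, with equality exactly for the truncated principal tableau
`[τ_k]_{2n}`, encoded by `{2k+2, 2k+4, …, 2n}`. -/
theorem maj_le_of_shape (k n : ℕ) (hkn : k ≤ n) (S : Finset ℕ)
    (hS : IsBallot (2 * n) S) (hcard : S.card = n - k) :
    (maj (2 * n) S : ℤ) ≤ (n : ℤ) ^ 2 - (k : ℤ) ^ 2 ∧
      ((maj (2 * n) S : ℤ) = (n : ℤ) ^ 2 - (k : ℤ) ^ 2 ↔
        S = (Finset.Icc (k + 1) n).image fun j => 2 * j) := by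
  obtain ⟨hSsub, -⟩ := hS
  set N := 2 * n with hN
  set D := desSet N S with hDdef
  set t := D.card with htdef
  set u : ℕ → ℕ := fun d => (D.filter (fun x => d < x)).card with hudef
  have hmemD : ∀ d, d ∈ D ↔ (1 ≤ d ∧ d ≤ N - 1) ∧ d ∉ S ∧ d + 1 ∈ S := by
    intro d; simp [hDdef, desSet, Finset.mem_filter, Finset.mem_Icc]
  -- pointwise bound
  have key : ∀ d ∈ D, d + (2 * u d + 1) ≤ N := by
    intro d hd
    rw [hmemD] at hd
    obtain ⟨⟨hd1, hd2⟩, hdS, hdS1⟩ := hd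
    have hNn : 1 ≤ N := by omega
    have hCcard : ((Finset.Icc 1 N) \ S).card = N - (n - k) := by
      rw [Finset.card_sdiff_of_subset hSsub, hcard, Nat.card_Icc]
      omega
    have h1 : (S.filter (fun x => x ≤ d)).card + (S.filter (fun x => ¬ x ≤ d)).card = n - k := by
      rw [Finset.card_filter_add_card_filter_not, hcard]
    have h2 : (((Finset.Icc 1 N) \ S).filter (fun x => x ≤ d)).card
        + (((Finset.Icc 1 N) \ S).filter (fun x => ¬ x ≤ d)).card = N - (n - k) := by
      rw [Finset.card_filter_add_card_filter_not, hCcard]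
    have h3 : u d + 1 ≤ (S.filter (fun x => ¬ x ≤ d)).card := by
      have hsub : insert (d+1) ((D.filter (fun x => d < x)).image (· + 1))
          ⊆ S.filter (fun x => ¬ x ≤ d) := by
        intro x hx
        rcases Finset.mem_insert.mp hx with rfl | hx
        · exact Finset.mem_filter.mpr ⟨hdS1, by omega⟩
        · obtain ⟨y, hy, rfl⟩ := Finset.mem_image.mp hx
          obtain ⟨hyD, hyd⟩ := Finset.mem_filter.mp hy
          rw [hmemD] at hyD
          exact Finset.mem_filter.mpr ⟨hyD.2.2, by omega⟩
      have hnot : d + 1 ∉ (D.filter (fun x => d < x)).image (· + 1) := by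
        intro hmem
        obtain ⟨y, hy, hy2⟩ := Finset.mem_image.mp hmem
        obtain ⟨-, hyd⟩ := Finset.mem_filter.mp hy
        omega
      calc u d + 1
          = (insert (d+1) ((D.filter (fun x => d < x)).image (· + 1))).card := by
            rw [Finset.card_insert_of_notMem hnot,
              Finset.card_image_of_injective _ (fun a b hab => by omega)]
        _ ≤ _ := Finset.card_le_card hsub
    have h4 : u d ≤ (((Finset.Icc 1 N) \ S).filter (fun x => ¬ x ≤ d)).card := by
      apply Finset.card_le_card
      intro x hx
      obtain ⟨hxD, hxd⟩ := Finset.mem_filter.mp hx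
      rw [hmemD] at hxD
      exact Finset.mem_filter.mpr ⟨Finset.mem_sdiff.mpr
        ⟨Finset.mem_Icc.mpr ⟨hxD.1.1, by omega⟩, hxD.2.1⟩, by omega⟩
    have h5 : d ≤ (S.filter (fun x => x ≤ d)).card
        + (((Finset.Icc 1 N) \ S).filter (fun x => x ≤ d)).card := by
      have hsub : Finset.Icc 1 d ⊆ (S.filter (fun x => x ≤ d))
          ∪ (((Finset.Icc 1 N) \ S).filter (fun x => x ≤ d)) := by
        intro x hx
        rw [Finset.mem_Icc] at hx
        by_cases hxS : x ∈ S
        · exact Finset.mem_union_left _ (Finset.mem_filter.mpr ⟨hxS, hx.2⟩)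
        · exact Finset.mem_union_right _ (Finset.mem_filter.mpr
            ⟨Finset.mem_sdiff.mpr ⟨Finset.mem_Icc.mpr ⟨hx.1, by omega⟩, hxS⟩, hx.2⟩)
      calc d = (Finset.Icc 1 d).card := by rw [Nat.card_Icc]; omega
        _ ≤ _ := le_trans (Finset.card_le_card hsub) (Finset.card_union_le _ _)
    omega
  -- number of descents is at most n - k
  have htle : t ≤ n - k := by
    have hsub : D.image (· + 1) ⊆ S := by
      intro x hx
      obtain ⟨y, hy, rfl⟩ := Finset.mem_image.mp hx
      exact ((hmemD y).mp hy).2.2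
    calc t = (D.image (· + 1)).card :=
          (Finset.card_image_of_injective _ (fun a b hab => by omega)).symm
      _ ≤ S.card := Finset.card_le_card hsub
      _ = n - k := hcard
  -- u is injective on D with image range t
  have hmono : ∀ a ∈ D, ∀ b ∈ D, a < b → u b < u a := by
    intro a ha b hb hab
    apply Finset.card_lt_card
    rw [Finset.ssubset_iff_of_subset (by
      intro x hx
      obtain ⟨hxD, hxb⟩ := Finset.mem_filter.mp hx
      exact Finset.mem_filter.mpr ⟨hxD, by omega⟩)]
    exact ⟨b, Finset.mem_filter.mpr ⟨hb, hab⟩, by simp⟩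
  have huinj : Set.InjOn u D := by
    intro a ha b hb hab
    rcases lt_trichotomy a b with h | h | h
    · exact absurd hab (by have := hmono a ha b hb h; omega)
    · exact h
    · exact absurd hab (by have := hmono b hb a ha h; omega)
  have hult : ∀ d ∈ D, u d < t := by
    intro d hd
    apply Finset.card_lt_card
    rw [Finset.ssubset_iff_of_subset (Finset.filter_subset _ _)]
    exact ⟨d, hd, by simp⟩
  have himg : D.image u = Finset.range t := by
    apply Finset.eq_of_subset_of_card_le
    · intro x hx
      obtain ⟨y, hy, rfl⟩ := Finset.mem_image.mp hx
      exact Finset.mem_range.mpr (hult y hy)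
    · rw [Finset.card_range, Finset.card_image_of_injOn huinj]
  have hsumuid : ∑ d ∈ D, u d = ∑ i ∈ Finset.range t, i := by
    rw [← himg]
    exact (Finset.sum_image (g := u) (f := id) (fun a ha b hb h => huinj ha hb h)).symm
  have hsumu2 : (∑ d ∈ D, u d) * 2 + t = t * t := by
    rw [hsumuid, Finset.sum_range_id_mul_two]
    cases t with
    | zero => rfl
    | succ m => simp only [Nat.succ_sub_one]; ring
  -- decomposition of the sum
  have hmajD : maj N S = ∑ d ∈ D, d := rfl
  have hdecomp : ∑ d ∈ D, (d + (2 * u d + 1)) = maj N S + ((∑ d ∈ D, u d) * 2 + t) := by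
    rw [Finset.sum_add_distrib, hmajD]
    congr 1
    rw [Finset.sum_add_distrib, Finset.sum_const, smul_eq_mul, mul_one, Finset.sum_mul]
    congr 1
    exact Finset.sum_congr rfl fun d _ => by ring
  have hsumbound : maj N S + t * t ≤ N * t := by
    have h1 : ∑ d ∈ D, (d + (2 * u d + 1)) ≤ ∑ _d ∈ D, N := Finset.sum_le_sum key
    rw [Finset.sum_const, smul_eq_mul, ← htdef, mul_comm t N, hdecomp, hsumu2] at h1
    exact h1
  -- integer versions
  have hcast : (maj N S : ℤ) + (t:ℤ) * t ≤ 2 * (n:ℤ) * t := by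
    have : ((maj N S + t * t : ℕ) : ℤ) ≤ ((N * t : ℕ) : ℤ) := by exact_mod_cast hsumbound
    push_cast at this
    rw [hN] at this
    push_cast at this
    linarith
  have htZ : (t:ℤ) ≤ (n:ℤ) - (k:ℤ) := by omega
  have hkZ : (0:ℤ) ≤ (k:ℤ) := by positivity
  have hfirst : (maj N S : ℤ) ≤ (n : ℤ) ^ 2 - (k : ℤ) ^ 2 := by
    have hprod : (0:ℤ) ≤ ((n:ℤ) - t - k) * ((n:ℤ) - t + k) :=
      mul_nonneg (by linarith) (by linarith)
    nlinarith [hcast]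
  refine ⟨hfirst, ?_, ?_⟩
  · -- equality implies S is the canonical set
    intro hmaj
    have htn : t = n - k := by
      have h1 : (n:ℤ) - (k:ℤ) ≤ (t:ℤ) := by
        nlinarith [hcast, hmaj, htZ, hkZ, sq_nonneg ((n:ℤ) - (k:ℤ) - (t:ℤ))]
      omega
    have htZeq : (t:ℤ) = (n:ℤ) - (k:ℤ) := by omega
    have hsum_eq : ∑ d ∈ D, (d + (2 * u d + 1)) = N * t := by
      have hint : ((∑ d ∈ D, (d + (2 * u d + 1)) : ℕ) : ℤ) = ((N * t : ℕ) : ℤ) := by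
        rw [hdecomp, hsumu2]
        push_cast
        rw [hN]
        push_cast
        rw [hmaj, htZeq]
        ring
      exact_mod_cast hint
    have hpt : ∀ d ∈ D, d + (2 * u d + 1) = N := by
      have := (Finset.sum_eq_sum_iff_of_le key).mp (by
        rw [hsum_eq, Finset.sum_const, smul_eq_mul, mul_comm])
      exact this
    have hsubim : D.image (· + 1) ⊆ S := by
      intro x hx
      obtain ⟨y, hy, rfl⟩ := Finset.mem_image.mp hx
      exact ((hmemD y).mp hy).2.2
    have hcardim : (D.image (· + 1)).card = t :=
      Finset.card_image_of_injective _ (fun a b hab => by omega)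
    have himS : D.image (· + 1) = S := by
      apply Finset.eq_of_subset_of_card_le hsubim
      rw [hcardim, hcard, htn]
    have hcardT : ((Finset.Icc (k+1) n).image (fun j => 2 * j)).card = n - k := by
      rw [Finset.card_image_of_injective _ (fun a b hab => by omega), Nat.card_Icc]
      omega
    have himT : D.image (· + 1) ⊆ (Finset.Icc (k+1) n).image (fun j => 2 * j) := by
      intro x hx
      obtain ⟨d, hd, rfl⟩ := Finset.mem_image.mp hx
      have hptd := hpt d hd
      have hud := hult d hd
      refine Finset.mem_image.mpr ⟨n - u d, Finset.mem_Icc.mpr ⟨by omega, by omega⟩, by omega⟩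
    rw [← himS]
    apply Finset.eq_of_subset_of_card_le himT
    rw [hcardT, hcardim, htn]
  · -- canonical set achieves equality
    intro hST
    have hdes : desSet N S = (Finset.Icc (k+1) n).image (fun j => 2 * j - 1) := by
      ext i
      simp only [desSet, Finset.mem_filter, Finset.mem_Icc, Finset.mem_image, hST]
      constructor
      · rintro ⟨⟨hi1, hi2⟩, hnot, j, ⟨hj1, hj2⟩, hj3⟩
        exact ⟨j, ⟨hj1, hj2⟩, by omega⟩
      · rintro ⟨j, ⟨hj1, hj2⟩, rfl⟩
        refine ⟨⟨by omega, by omega⟩, ?_, ⟨j, ⟨hj1, hj2⟩, by omega⟩⟩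
        rintro ⟨j', ⟨hj'1, hj'2⟩, hj'⟩
        omega
    have hmajT : maj N S = ∑ j ∈ Finset.Icc (k+1) n, (2 * j - 1) := by
      rw [maj, ← hDdef, hDdef, hdes]
      exact Finset.sum_image (fun a ha b hb h => by
        simp only [Finset.mem_coe, Finset.mem_Icc] at ha hb; omega)
    have hc : ((∑ j ∈ Finset.Icc (k+1) n, (2 * j - 1) : ℕ) : ℤ)
        = ∑ j ∈ Finset.Icc (k+1) n, (2 * (j:ℤ) - 1) := by
      rw [Nat.cast_sum]
      refine Finset.sum_congr rfl fun j hj => ?_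
      simp only [Finset.mem_Icc] at hj
      omega
    rw [hmajT, hc, sum_odd_Icc k n hkn]
end

section
/- Let N ∈ ℕ and let S ⊆ {1,…,N} satisfy the ballot condition. Define the column of an entry j ∈ {1,…,N} by col(j) = |S ∩ {1,…,j}| if j ∈ S, and col(j) = j − |S ∩ {1,…,j}| if j ∉ S. Then for every i ∈ {1,…,N−1} exactly one of the following two alternatives holds: either i ∈ des(S) (i.e., i+1 lies in a lower row than i), or col(i+1) > col(i) (i.e., i+1 lies strictly to the right of i). Consequently, defining the charge c(S) = Σ_{i ∈ {1,…,N−1}, col(i+1) > col(i)} i, one has maj(S) + c(S) = N(N−1)/2. -/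
/-- The column of the entry `j` in the two-row standard tableau encoded by
`S`: it is `|S ∩ {1,…,j}|` if `j` lies in the second row (`j ∈ S`), and
`j − |S ∩ {1,…,j}|` if `j` lies in the first row. -/
def col (S : Finset ℕ) (j : ℕ) : ℕ :=
  if j ∈ S then (S ∩ Finset.Icc 1 j).card else j - (S ∩ Finset.Icc 1 j).card

/-- For a ballot set `S ⊆ {1,…,N}` and every `i ∈ {1,…,N−1}`, exactly one of
the two alternatives holds: either `i ∈ des(S)` (the entry `i+1` lies in a
lower row than `i`), or `col(i+1) > col(i)` (the entry `i+1` lies strictly to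
the right of `i`).  Consequently, the charge
`c(S) = Σ_{i : col(i+1) > col(i)} i` satisfies `maj(S) + c(S) = N(N−1)/2`. -/
theorem maj_add_charge (N : ℕ) (S : Finset ℕ) (hS : IsBallot N S) :
    (∀ i ∈ Finset.Icc 1 (N - 1), Xor' (i ∈ desSet N S) (col S i < col S (i + 1))) ∧
      maj N S + ∑ i ∈ (Finset.Icc 1 (N - 1)).filter (fun i => col S i < col S (i + 1)), i =
        N * (N - 1) / 2 := by
  obtain ⟨hsub, hball⟩ := hS
  have key : ∀ i ∈ Finset.Icc 1 (N - 1), Xor' (i ∈ desSet N S) (col S i < col S (i + 1)) := by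
    intro i hi
    obtain ⟨hi1, hi2⟩ := Finset.mem_Icc.mp hi
    have hi1N : i + 1 ≤ N := by omega
    have hcard : (S ∩ Finset.Icc 1 (i + 1)).card =
        if i + 1 ∈ S then (S ∩ Finset.Icc 1 i).card + 1 else (S ∩ Finset.Icc 1 i).card := by
      have hins : Finset.Icc 1 (i + 1) = insert (i + 1) (Finset.Icc 1 i) := by
        ext x; simp [Finset.mem_Icc]; omega
      by_cases h : i + 1 ∈ S
      · rw [hins, Finset.inter_insert_of_mem h, Finset.card_insert_of_notMem, if_pos h]
        simp [Finset.mem_Icc]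
      · rw [hins, Finset.inter_insert_of_notMem h, if_neg h]
    have hb1 : 2 * (S ∩ Finset.Icc 1 i).card ≤ i :=
      hball i (Finset.mem_Icc.mpr ⟨hi1, by omega⟩)
    have hb2 : 2 * (S ∩ Finset.Icc 1 (i + 1)).card ≤ i + 1 :=
      hball (i + 1) (Finset.mem_Icc.mpr ⟨by omega, hi1N⟩)
    have hle : (S ∩ Finset.Icc 1 i).card ≤ i := by omega
    have hdes : i ∈ desSet N S ↔ (i ∉ S ∧ i + 1 ∈ S) := by
      simp [desSet, hi]
    unfold col
    by_cases h1 : i ∈ S <;> by_cases h2 : i + 1 ∈ S <;>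
      [ (have hc2 : (S ∩ Finset.Icc 1 (i + 1)).card = (S ∩ Finset.Icc 1 i).card + 1 := by
          rw [hcard, if_pos h2]);
        (have hc2 : (S ∩ Finset.Icc 1 (i + 1)).card = (S ∩ Finset.Icc 1 i).card := by
          rw [hcard, if_neg h2]);
        (have hc2 : (S ∩ Finset.Icc 1 (i + 1)).card = (S ∩ Finset.Icc 1 i).card + 1 := by
          rw [hcard, if_pos h2]);
        (have hc2 : (S ∩ Finset.Icc 1 (i + 1)).card = (S ∩ Finset.Icc 1 i).card := by
          rw [hcard, if_neg h2])] <;>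
      simp only [h1, h2, if_true, if_false, if_pos, if_neg, hdes, Xor', hc2] <;>
      simp [h1, h2] <;> omega
  refine ⟨key, ?_⟩
  have hcompl : (Finset.Icc 1 (N - 1)).filter (fun i => col S i < col S (i + 1)) =
      (Finset.Icc 1 (N - 1)).filter (fun i => ¬ (i ∉ S ∧ i + 1 ∈ S)) := by
    apply Finset.filter_congr
    intro i hi
    have hx := key i hi
    have hdes : i ∈ desSet N S ↔ (i ∉ S ∧ i + 1 ∈ S) := by simp [desSet, hi]
    rw [Xor', hdes] at hx
    unfold Xor at hx
    constructor
    · intro h; tauto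
    · intro h; tauto
  rw [hcompl]
  have hmaj : maj N S = ∑ i ∈ (Finset.Icc 1 (N - 1)).filter (fun i => (i ∉ S ∧ i + 1 ∈ S)), i :=
    rfl
  rw [hmaj, Finset.sum_filter_add_sum_filter_not]
  have : ∑ i ∈ Finset.Icc 1 (N - 1), i = ∑ i ∈ Finset.range N, i := by
    rcases N with _ | n
    · simp
    · rw [Finset.range_eq_Ico, ← Finset.Ico_add_one_right_eq_Icc]
      rw [show Nat.succ n - 1 = n from rfl]
      rw [Finset.sum_Ico_eq_sum_range, Finset.sum_Ico_eq_sum_range]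
      simp [Finset.sum_range_succ', add_comm]
  rw [this, Finset.sum_range_id]
end

section
/- Fix n ≥ 1 and set N = 2n. For a, b ∈ {1,2}, define a map j_{a,b} on subsets of {1,…,N} by j_{a,b}(S) = S ∪ A ∪ B ⊆ {1,…,N+2}, where A = {N+1} if a = 2 and A = ∅ if a = 1, and B = {N+2} if b = 2 and B = ∅ if b = 1 (i.e., the new entries N+1 and N+2 are placed in rows a and b, respectively, of the corresponding two-row tableau). Suppose that for every S ⊆ {1,…,N} satisfying the ballot condition, the set j_{a,b}(S) satisfies the ballot condition in {1,…,N+2} and maj(j_{a,b}(S)) = maj(S) + (N+1). Then (a,b) = (1,2), i.e., j_{a,b} is the serpentine embedding i_N. (This is the uniqueness assertion: the serpentine embedding is the unique row-placement embedding of two-row standard tableaux that shifts the major index by N+1, equivalently that preserves the stable major index r.) -/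
lemma maj_empty (N : ℕ) : maj N ∅ = 0 := by simp [maj, desSet]

lemma des_single (n : ℕ) (hn : 1 ≤ n) :
    desSet (2 * n + 2) ({2 * n + 1} : Finset ℕ) = {2 * n} := by
  ext i
  simp only [desSet, Finset.mem_filter, Finset.mem_Icc, Finset.mem_singleton]
  omega

lemma des_pair (n : ℕ) (hn : 1 ≤ n) :
    desSet (2 * n + 2) (({2 * n + 1} : Finset ℕ) ∪ {2 * n + 2}) = {2 * n} := by
  ext i
  simp only [desSet, Finset.mem_filter, Finset.mem_Icc, Finset.mem_union,
    Finset.mem_singleton]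
  omega

/-- Uniqueness of the serpentine embedding: if a row-placement embedding
`j_{a,b}` (placing the new entry `N+1` in row `a` and `N+2` in row `b`, where
`a, b ∈ {1,2}` and row 2 membership means joining the encoding set) sends every
ballot set `S ⊆ {1,…,N}` (with `N = 2n`) to a ballot set in `{1,…,N+2}` while
shifting the major index by exactly `N+1` (equivalently, preserving the stable
major index `r`), then `(a,b) = (1,2)`, i.e. `j_{a,b}` is the serpentine
embedding `i_N`. -/
theorem serpentine_embedding_unique (n : ℕ) (hn : 1 ≤ n) (a b : ℕ)
    (ha : a ∈ ({1, 2} : Finset ℕ)) (hb : b ∈ ({1, 2} : Finset ℕ))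
    (h : ∀ S : Finset ℕ, IsBallot (2 * n) S →
      IsBallot (2 * n + 2)
          (S ∪ (if a = 2 then {2 * n + 1} else ∅) ∪ (if b = 2 then {2 * n + 2} else ∅)) ∧
        maj (2 * n + 2)
            (S ∪ (if a = 2 then {2 * n + 1} else ∅) ∪ (if b = 2 then {2 * n + 2} else ∅)) =
          maj (2 * n) S + (2 * n + 1)) :
    a = 1 ∧ b = 2 := by
  have hball : IsBallot (2 * n) ∅ := by
    constructor
    · exact Finset.empty_subset _
    · intro m hm; simp
  have h2 := (h ∅ hball).2
  simp only [Finset.empty_union, maj_empty] at h2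
  simp only [Finset.mem_insert, Finset.mem_singleton] at ha hb
  rcases ha with ha | ha <;> rcases hb with hb | hb <;> subst ha <;> subst hb
  · simp [maj_empty] at h2
  · exact ⟨rfl, rfl⟩
  · norm_num at h2
    rw [maj, des_single n hn, Finset.sum_singleton] at h2
    omega
  · norm_num at h2
    rw [maj, Finset.insert_eq, des_pair n hn, Finset.sum_singleton] at h2
    omega
end
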